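/- Let p be a prime such that 2 is a primitive root modulo p, let k ≥ 1, and let s be a binary sequence with period dividing p·2^k. Then there exists a binary sequence s' with period dividing p·2^{k−1} such that (1 + E + E² + ⋯ + E^{p−1})^{2^{k−1}} (E + 1)^{2^k} s = (E + 1)^{2^{k−1}} s'. -/

import Mathlib

open Polynomial

noncomputable def polyApp (f : Polynomial (ZMod 2)) (s : ℕ → ZMod 2) : ℕ → ZMod 2 :=
  fun i => f.sum fun j c => c * s (i + j)

lemma polyApp_add (f g : Polynomial (ZMod 2)) (s : ℕ → ZMod 2) :
    polyApp (f + g) s = fun i => polyApp f s i + polyApp g s i := by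
  funext i
  exact Polynomial.sum_add_index f g _ (fun j => zero_mul _) (fun j c d => add_mul c d _)

lemma polyApp_monomial (n : ℕ) (a : ZMod 2) (s : ℕ → ZMod 2) :
    polyApp (monomial n a) s = fun i => a * s (i + n) := by
  funext i
  exact Polynomial.sum_monomial_index a _ (zero_mul _)

lemma polyApp_mono_mul (n : ℕ) (a : ZMod 2) (g : Polynomial (ZMod 2)) (s : ℕ → ZMod 2) :
    polyApp (monomial n a * g) s = fun i => a * polyApp g s (i + n) := by
  induction g using Polynomial.induction_on' with
  | add q r hq hr =>
    rw [mul_add, polyApp_add, hq, hr, polyApp_add]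
    funext i; simp [mul_add]
  | monomial m b =>
    rw [monomial_mul_monomial, polyApp_monomial, polyApp_monomial]
    funext i
    rw [← add_assoc, mul_assoc]

lemma polyApp_mul (f g : Polynomial (ZMod 2)) (s : ℕ → ZMod 2) :
    polyApp (f * g) s = polyApp f (polyApp g s) := by
  induction f using Polynomial.induction_on' with
  | add q r hq hr => rw [add_mul, polyApp_add, hq, hr, polyApp_add]
  | monomial n a => rw [polyApp_mono_mul, polyApp_monomial]

theorem reduction_step_period_p
    (p : ℕ) (hp : p.Prime)
    (hgen : ∀ a : ZMod p, a ≠ 0 → ∃ n : ℕ, (2 : ZMod p) ^ n = a)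
    (k : ℕ) (hk : 1 ≤ k)
    (s : ℕ → ZMod 2) (hper : ∀ i, s (i + p * 2 ^ k) = s i) :
    ∃ s' : ℕ → ZMod 2, (∀ i, s' (i + p * 2 ^ (k - 1)) = s' i) ∧
      polyApp ((∑ j ∈ Finset.range p, (X : Polynomial (ZMod 2)) ^ j) ^ (2 ^ (k - 1)) *
          (X + 1) ^ (2 ^ k)) s =
        polyApp ((X + 1) ^ (2 ^ (k - 1))) s' := by
  set m := 2 ^ (k - 1) with hm
  set Φ : Polynomial (ZMod 2) := ∑ j ∈ Finset.range p, (X : Polynomial (ZMod 2)) ^ j with hΦdef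
  have hΦ : Φ * (X + 1) = X ^ p + 1 := by
    have h := geom_sum_mul (X : Polynomial (ZMod 2)) p
    rwa [CharTwo.sub_eq_add, CharTwo.sub_eq_add] at h
  have key : Φ ^ m * (X + 1) ^ m = X ^ (p * m) + 1 := by
    rw [← mul_pow, hΦ, hm, add_pow_char_pow, one_pow, ← pow_mul]
  have h2k : 2 ^ k = m + m := by
    rw [hm, ← two_mul, ← pow_succ', Nat.sub_add_cancel hk]
  have hsum : p * m + p * m = p * 2 ^ k := by rw [h2k, Nat.mul_add]
  set s' : ℕ → ZMod 2 := fun i => s (i + p * m) + s i with hs'def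
  have hs' : polyApp (Φ ^ m * (X + 1) ^ m) s = s' := by
    rw [key, ← monomial_zero_one, X_pow_eq_monomial, polyApp_add, polyApp_monomial,
      polyApp_monomial]
    funext i
    simp [hs'def]
  refine ⟨s', ?_, ?_⟩
  · intro i
    simp only [hs'def]
    rw [add_assoc, hsum, hper, add_comm]
  · rw [← hs', ← polyApp_mul]
    rw [show Φ ^ m * (X + 1) ^ (2^k) = (X + 1) ^ m * (Φ ^ m * (X + 1) ^ m) from by
      rw [h2k, pow_add]; ring]
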